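/- arXiv:2509.06408 — 3 statements merged into one kernel-verified Lean document; each statement's English description precedes it below -/
import Mathlib

section
/- For n ≥ 30 and 6·log n / n ≤ p ≤ 1/2, there exists a constant C > 0 depending only on the support S_ξ of ξ such that, with probability at least 1 − exp(−2.7·pn), every pair of columns of M satisfies ‖C_i(M) − C_j(M)‖₁ ≤ C·pn for all i, j ∈ [n], where ‖·‖₁ is the sum of the absolute values of the coordinates. -/
open MeasureTheory ProbabilityTheory

/-- The law of `η = δ·ξ + b`. -/
noncomputable def etaLaw (L : ℕ) (a pv : Fin L → ℝ) (p b : ℝ) : Measure ℝ :=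
  ENNReal.ofReal (1 - p) • Measure.dirac b +
    ENNReal.ofReal p • ∑ i, ENNReal.ofReal (pv i) • Measure.dirac (a i + b)

lemma integrable_dirac_of_meas {f : ℝ → ℝ} (hf : Measurable f) (x : ℝ) :
    Integrable f (Measure.dirac x) := by
  refine ⟨hf.aestronglyMeasurable, ?_⟩
  rw [HasFiniteIntegral, lintegral_dirac]
  exact ENNReal.coe_lt_top

lemma integral_etaLaw (L : ℕ) (a pv : Fin L → ℝ) (p b : ℝ)
    (hp0 : 0 ≤ p) (hp1 : p ≤ 1) (hpv : ∀ i, 0 ≤ pv i)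
    (f : ℝ → ℝ) (hf : Measurable f) :
    ∫ x, f x ∂(etaLaw L a pv p b)
      = (1 - p) * f b + p * ∑ i, pv i * f (a i + b) := by
  have hd : ∀ x : ℝ, Integrable f (Measure.dirac x) := integrable_dirac_of_meas hf
  have hint2 : ∀ i : Fin L, Integrable f (ENNReal.ofReal (pv i) • Measure.dirac (a i + b)) :=
    fun i => (hd _).smul_measure ENNReal.ofReal_ne_top
  rw [etaLaw, integral_add_measure
      ((hd b).smul_measure ENNReal.ofReal_ne_top)
      ((integrable_finset_sum_measure.2 fun i _ => hint2 i).smul_measure ENNReal.ofReal_ne_top),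
    integral_smul_measure, integral_smul_measure,
    integral_finset_sum_measure (fun i _ => hint2 i)]
  simp only [integral_smul_measure, integral_dirac, smul_eq_mul,
    ENNReal.toReal_ofReal hp0, ENNReal.toReal_ofReal (by linarith : (0:ℝ) ≤ 1 - p)]
  congr 1
  rw [Finset.mul_sum Finset.univ (fun i => pv i * f (a i + b)) p,
    Finset.mul_sum Finset.univ (fun x => (ENNReal.ofReal (pv x)).toReal * f (a x + b)) p]
  apply Finset.sum_congr rfl
  intro i _
  rw [ENNReal.toReal_ofReal (hpv i)]

lemma etaLaw_null (L : ℕ) (a pv : Fin L → ℝ) (p b : ℝ) {s : Set ℝ}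
    (hb : b ∉ s) (ha : ∀ i, a i + b ∉ s) : etaLaw L a pv p b s = 0 := by
  simp only [etaLaw, Measure.coe_add, Measure.coe_smul, Pi.add_apply, Pi.smul_apply,
    smul_eq_mul]
  have h1 : Measure.dirac b s = 0 := by
    rw [Measure.dirac_apply, Set.indicator_of_notMem hb]
  have h2 : (∑ i : Fin L, ENNReal.ofReal (pv i) • Measure.dirac (a i + b)) s = 0 := by
    rw [Measure.finset_sum_apply]
    refine Finset.sum_eq_zero fun i _ => ?_
    simp only [Measure.coe_smul, Pi.smul_apply, smul_eq_mul]
    rw [Measure.dirac_apply, Set.indicator_of_notMem (ha i), mul_zero]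
  rw [h1, h2, mul_zero, mul_zero, add_zero]

/-- with probability at least `1 - exp(-2.7 pn)`, all pairs of columns of `M`
are at `ℓ¹`-distance at most `C·pn`, with `C` depending only on the support of `ξ`. -/
theorem column_difference_l1_bound
    (L : ℕ) (a : Fin L → ℝ) (ha1 : ∀ i, |a i| ≤ 1) :
    ∃ C : ℝ, 0 < C ∧
      ∀ (pv : Fin L → ℝ), (∀ i, 0 < pv i) → (∑ i, pv i = 1) →
      ∀ (b : ℝ) (n : ℕ), 30 ≤ n → ∀ p : ℝ,
        6 * Real.log n / n ≤ p → p ≤ 1 / 2 →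
        ∀ (Ω : Type) [MeasurableSpace Ω] (μ : Measure Ω) [IsProbabilityMeasure μ]
          (M : Ω → Matrix (Fin n) (Fin n) ℝ),
          (∀ i j, Measurable fun ω => M ω i j) →
          iIndepFun
            (fun ij : Fin n × Fin n => fun ω => M ω ij.1 ij.2) μ →
          (∀ i j, Measure.map (fun ω => M ω i j) μ = etaLaw L a pv p b) →
          1 - Real.exp (-2.7 * (p * n)) ≤
            (μ {ω | ∀ i j : Fin n, ∑ k : Fin n, |M ω k i - M ω k j| ≤ C * (p * n)}).toReal := by
  refine ⟨10, by norm_num, ?_⟩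
  intro pv hpv hpv1 b n hn p hplb hpub Ω _ μ _ M hMmeas hMindep hMlaw
  -- basic positivity facts
  have hn30 : (30:ℝ) ≤ n := by exact_mod_cast hn
  have hn0 : (0:ℝ) < n := by linarith
  have hn1 : (1:ℝ) < n := by linarith
  have hlogn : 0 < Real.log n := Real.log_pos hn1
  have hp0 : 0 < p := lt_of_lt_of_le (by positivity) hplb
  have hp1 : p ≤ 1 := by linarith
  have hpn0 : 0 < p * n := by positivity
  have hlogn_le : Real.log n ≤ p * n / 6 := by
    have := (div_le_iff₀ hn0).1 hplb
    linarith
  have he2 : Real.exp 2 ≤ 7.39 := by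
    have h1 := Real.exp_one_lt_d9
    have h2 : Real.exp 2 = Real.exp 1 * Real.exp 1 := by
      rw [← Real.exp_add]; norm_num
    have h3 : (0:ℝ) < Real.exp 1 := Real.exp_pos 1
    nlinarith
  -- the family of absolute deviations
  set Y : Fin n × Fin n → Ω → ℝ := fun ij ω => |M ω ij.1 ij.2 - b| with hYdef
  have hYmeas : ∀ ij, Measurable (Y ij) :=
    fun ij => ((hMmeas ij.1 ij.2).sub measurable_const).abs
  have hYindep : iIndepFun Y μ :=
    hMindep.comp (fun _ x => |x - b|)
      (fun _ => (measurable_id.sub measurable_const).abs)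
  have hYnonneg : ∀ ij ω, 0 ≤ Y ij ω := fun ij ω => abs_nonneg _
  -- a.e. bound Y ≤ 1
  have hYae : ∀ ij, ∀ᵐ ω ∂μ, Y ij ω ≤ 1 := by
    intro ij
    have hsm : MeasurableSet {x : ℝ | ¬ |x - b| ≤ 1} :=
      ((measurable_id.sub measurable_const).abs measurableSet_Iic).compl
    have hpre : {ω | ¬ Y ij ω ≤ 1}
        = (fun ω => M ω ij.1 ij.2) ⁻¹' {x | ¬ |x - b| ≤ 1} := rfl
    have hz : μ {ω | ¬ Y ij ω ≤ 1} = 0 := by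
      rw [hpre, ← Measure.map_apply (hMmeas ij.1 ij.2) hsm, hMlaw]
      refine etaLaw_null L a pv p b ?_ ?_
      · simp
      · intro i
        simp only [Set.mem_setOf_eq, not_not, add_sub_cancel_right]
        exact ha1 i
    exact (ae_iff).2 hz
  -- integrability of exp(2 Y)
  have hYint : ∀ ij, Integrable (fun ω => Real.exp (2 * Y ij ω)) μ := by
    intro ij
    refine (integrable_const (Real.exp 2)).mono'
      (((hYmeas ij).const_mul 2).exp.aestronglyMeasurable) ?_
    filter_upwards [hYae ij] with ω h
    rw [Real.norm_eq_abs, Real.abs_exp]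
    exact Real.exp_le_exp.2 (by linarith)
  -- the common mgf value
  set m : ℝ := (1 - p) + p * ∑ l, pv l * Real.exp (2 * |a l|) with hmdef
  have hfmeas : Measurable fun x : ℝ => Real.exp (2 * |x - b|) :=
    (((measurable_id.sub measurable_const).abs).const_mul 2).exp
  have hmgf : ∀ ij, mgf (Y ij) μ 2 = m := by
    intro ij
    have h1 : mgf (Y ij) μ 2
        = ∫ x, Real.exp (2 * |x - b|) ∂(Measure.map (fun ω => M ω ij.1 ij.2) μ) := by
      rw [mgf, integral_map (hMmeas ij.1 ij.2).aemeasurable hfmeas.aestronglyMeasurable]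
    rw [h1, hMlaw, integral_etaLaw L a pv p b hp0.le hp1 (fun i => (hpv i).le) _ hfmeas]
    simp [hmdef, sub_self, add_sub_cancel_right]
  have hm0 : 0 ≤ m := by
    have : 0 ≤ ∑ l, pv l * Real.exp (2 * |a l|) :=
      Finset.sum_nonneg fun l _ => mul_nonneg (hpv l).le (Real.exp_pos _).le
    have h2 : 0 ≤ p * ∑ l, pv l * Real.exp (2 * |a l|) := mul_nonneg hp0.le this
    linarith
  have hmle : m ≤ Real.exp (p * (Real.exp 2 - 1)) := by
    have hsum : ∑ l, pv l * Real.exp (2 * |a l|) ≤ Real.exp 2 := by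
      calc ∑ l, pv l * Real.exp (2 * |a l|)
          ≤ ∑ l, pv l * Real.exp 2 := by
            refine Finset.sum_le_sum fun l _ => ?_
            exact mul_le_mul_of_nonneg_left
              (Real.exp_le_exp.2 (by have := ha1 l; have := abs_nonneg (a l); linarith))
              (hpv l).le
        _ = Real.exp 2 := by rw [← Finset.sum_mul, hpv1, one_mul]
    have h1 : m ≤ 1 + p * (Real.exp 2 - 1) := by
      have := mul_le_mul_of_nonneg_left hsum hp0.le
      simp only [hmdef]; linarith
    linarith [Real.add_one_le_exp (p * (Real.exp 2 - 1))]
  -- bad events, one per column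
  set B : Fin n → Set Ω := fun i => {ω | 5 * (p * n) ≤ ∑ k, |M ω k i - b|} with hBdef
  have hBmeas : ∀ i, MeasurableSet (B i) := by
    intro i
    exact measurableSet_le measurable_const
      (Finset.measurable_sum _ fun k _ => ((hMmeas k i).sub measurable_const).abs)
  -- Chernoff for each column
  have hB : ∀ i, (μ (B i)).toReal ≤ Real.exp ((Real.exp 2 - 11) * (p * n)) := by
    intro i
    set emb : Fin n ↪ Fin n × Fin n :=
      ⟨fun k => (k, i), fun x y h => congrArg Prod.fst h⟩ with hembdef
    set s : Finset (Fin n × Fin n) := Finset.univ.map emb with hsdef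
    have hsum_eq : ∀ ω, (∑ ij ∈ s, Y ij) ω = ∑ k, |M ω k i - b| := by
      intro ω
      rw [Finset.sum_apply, hsdef, Finset.sum_map]
      rfl
    have hBeq : B i = {ω | 5 * (p * n) ≤ (∑ ij ∈ s, Y ij) ω} := by
      ext ω; simp only [hBdef, Set.mem_setOf_eq, hsum_eq]
    have hcher := measure_ge_le_exp_mul_mgf (μ := μ) (X := ∑ ij ∈ s, Y ij)
      (t := 2) (5 * (p * n)) (by norm_num)
      (hYindep.integrable_exp_mul_sum hYmeas (fun ij _ => hYint ij))
    have hmgfsum : mgf (∑ ij ∈ s, Y ij) μ 2 = m ^ n := by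
      rw [hYindep.mgf_sum hYmeas s]
      rw [Finset.prod_congr rfl (fun ij _ => hmgf ij), Finset.prod_const]
      congr 1
      rw [hsdef, Finset.card_map, Finset.card_univ, Fintype.card_fin]
    rw [hBeq]
    refine hcher.trans ?_
    rw [hmgfsum]
    have hpow : m ^ n ≤ Real.exp (p * (Real.exp 2 - 1)) ^ n :=
      pow_le_pow_left₀ hm0 hmle n
    calc Real.exp (-2 * (5 * (p * n))) * m ^ n
        ≤ Real.exp (-2 * (5 * (p * n))) * Real.exp (p * (Real.exp 2 - 1)) ^ n := by
          exact mul_le_mul_of_nonneg_left hpow (Real.exp_pos _).le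
      _ = Real.exp (-2 * (5 * (p * n)) + n * (p * (Real.exp 2 - 1))) := by
          rw [← Real.exp_nat_mul, ← Real.exp_add]
      _ = Real.exp ((Real.exp 2 - 11) * (p * n)) := by ring_nf
  -- union bound
  set U : Set Ω := ⋃ i, B i with hUdef
  have hUmeas : MeasurableSet U := MeasurableSet.iUnion hBmeas
  have hUbound : μ U ≤ ENNReal.ofReal (Real.exp (-2.7 * (p * n))) := by
    have h1 : μ U ≤ ∑ i, μ (B i) := measure_iUnion_fintype_le μ B
    have h2 : ∀ i, μ (B i) ≤ ENNReal.ofReal (Real.exp ((Real.exp 2 - 11) * (p * n))) := by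
      intro i
      exact (ENNReal.le_ofReal_iff_toReal_le (measure_ne_top μ _)
        (Real.exp_pos _).le).2 (hB i)
    calc μ U ≤ ∑ i, μ (B i) := h1
      _ ≤ ∑ _i : Fin n, ENNReal.ofReal (Real.exp ((Real.exp 2 - 11) * (p * n))) :=
          Finset.sum_le_sum fun i _ => h2 i
      _ = n * ENNReal.ofReal (Real.exp ((Real.exp 2 - 11) * (p * n))) := by
          rw [Finset.sum_const, Finset.card_univ, Fintype.card_fin, nsmul_eq_mul]
      _ = ENNReal.ofReal (n * Real.exp ((Real.exp 2 - 11) * (p * n))) := by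
          rw [ENNReal.ofReal_mul (by positivity)]
          congr 1
          rw [ENNReal.ofReal_natCast]
      _ ≤ ENNReal.ofReal (Real.exp (-2.7 * (p * n))) := by
          refine ENNReal.ofReal_le_ofReal ?_
          have hcast : (n:ℝ) = Real.exp (Real.log n) := (Real.exp_log hn0).symm
          calc (n:ℝ) * Real.exp ((Real.exp 2 - 11) * (p * n))
              = Real.exp (Real.log n + (Real.exp 2 - 11) * (p * n)) := by
                rw [hcast, ← Real.exp_add, Real.log_exp]
            _ ≤ Real.exp (-2.7 * (p * n)) := by
                refine Real.exp_le_exp.2 ?_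
                have : Real.log n ≤ p * n / 6 := hlogn_le
                nlinarith
  -- inclusion of the good event in the target
  have hincl : Uᶜ ⊆ {ω | ∀ i j : Fin n, ∑ k : Fin n, |M ω k i - M ω k j| ≤ 10 * (p * n)} := by
    intro ω hω i j
    simp only [hUdef, Set.compl_iUnion, Set.mem_iInter, Set.mem_compl_iff, hBdef,
      Set.mem_setOf_eq, not_le] at hω
    have hi := hω i
    have hj := hω j
    calc ∑ k : Fin n, |M ω k i - M ω k j|
        ≤ ∑ k : Fin n, (|M ω k i - b| + |M ω k j - b|) := by
          refine Finset.sum_le_sum fun k _ => ?_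
          have : M ω k i - M ω k j = (M ω k i - b) - (M ω k j - b) := by ring
          rw [this]
          exact abs_sub _ _
      _ = (∑ k, |M ω k i - b|) + ∑ k, |M ω k j - b| := Finset.sum_add_distrib
      _ ≤ 10 * (p * n) := by linarith
  -- conclude
  have hcompl : μ Uᶜ = 1 - μ U := prob_compl_eq_one_sub hUmeas
  have hfinal : (1 : ENNReal) - ENNReal.ofReal (Real.exp (-2.7 * (p * n)))
      ≤ μ {ω | ∀ i j : Fin n, ∑ k : Fin n, |M ω k i - M ω k j| ≤ 10 * (p * n)} := by
    refine le_trans ?_ (measure_mono hincl)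
    rw [hcompl]
    exact tsub_le_tsub_left hUbound 1
  have hofle : ENNReal.ofReal (Real.exp (-2.7 * (p * n))) ≤ 1 := by
    rw [← ENNReal.ofReal_one]
    refine ENNReal.ofReal_le_ofReal ?_
    rw [← Real.exp_zero]
    exact Real.exp_le_exp.2 (by nlinarith)
  have := ENNReal.toReal_mono (measure_ne_top μ _) hfinal
  refine le_trans ?_ this
  rw [ENNReal.toReal_sub_of_le hofle ENNReal.one_ne_top, ENNReal.toReal_one,
    ENNReal.toReal_ofReal (Real.exp_pos _).le]
end

section
/- Let ζ be a real random variable with E[ζ⁴] < ∞ and E[ζ²] > 0. Then there exists a constant C_ζ > 0 depending only on the law of ζ such that the following holds. Let ε ∈ (0,1), s > 0, let k be a positive integer, and let h₁ < h₂ be reals with h := h₂ − h₁ > 0. If X is a random variable uniformly distributed on the finite set (1/k)ℤ ∩ [h₁, h₂] (independent of ζ), then P_X( E_ζ[dist(ζ s X, ℤ)] ≤ ε ) ≤ C_ζ · max{ 1/(kh), ε/(sh), ε, s/k }. -/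
open MeasureTheory ProbabilityTheory

/-- Distance from a real number to the nearest integer. -/
noncomputable def distZ (t : ℝ) : ℝ := |t - (round t : ℤ)|

namespace DistAux

lemma distZ_nonneg (t : ℝ) : 0 ≤ distZ t := abs_nonneg _

lemma distZ_le_half (t : ℝ) : distZ t ≤ 1/2 := abs_sub_round t

lemma distZ_le_int (t : ℝ) (n : ℤ) : distZ t ≤ |t - n| := by
  rcases eq_or_ne n (round t) with h | h
  · simp [distZ, h]
  · have h1 : (1:ℝ) ≤ |(n:ℝ) - (round t : ℤ)| := by
      have : (1:ℤ) ≤ |n - round t| := Int.one_le_abs (sub_ne_zero.mpr h)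
      calc (1:ℝ) = ((1:ℤ):ℝ) := by norm_num
        _ ≤ ((|n - round t| : ℤ) : ℝ) := by exact_mod_cast this
        _ = |(n:ℝ) - (round t : ℤ)| := by push_cast [Int.cast_abs]; ring_nf
    have h2 := abs_sub_round t
    have h3 : |(n:ℝ) - (round t : ℤ)| ≤ |t - n| + |t - (round t : ℤ)| := by
      have := abs_sub_abs_le_abs_sub ((n:ℝ) - t) ((round t : ℤ) - t)
      calc |(n:ℝ) - (round t : ℤ)| = |((n:ℝ) - t) - (((round t : ℤ):ℝ) - t)| := by ring_nf
        _ ≤ |(n:ℝ) - t| + |((round t : ℤ):ℝ) - t| := abs_sub _ _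
        _ = |t - n| + |t - (round t : ℤ)| := by rw [abs_sub_comm (n:ℝ) t, abs_sub_comm ((round t : ℤ):ℝ) t]
    have : distZ t ≤ 1/2 := abs_sub_round t
    simp only [distZ] at *
    linarith

lemma distZ_sub_le (a b : ℝ) : distZ (a - b) ≤ distZ a + distZ b := by
  calc distZ (a - b) ≤ |(a - b) - ((round a - round b : ℤ) : ℝ)| := distZ_le_int _ _
    _ = |(a - (round a : ℤ)) - (b - (round b : ℤ))| := by push_cast; ring_nf
    _ ≤ |a - (round a : ℤ)| + |b - (round b : ℤ)| := abs_sub _ _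
    _ = distZ a + distZ b := rfl

lemma distZ_neg (t : ℝ) : distZ (-t) = distZ t := by
  have h1 : distZ (-t) ≤ distZ t := by
    calc distZ (-t) ≤ |(-t) - ((-(round t) : ℤ) : ℝ)| := distZ_le_int _ _
      _ = |t - (round t : ℤ)| := by push_cast; rw [← abs_neg]; ring_nf
      _ = distZ t := rfl
  have h2 : distZ t ≤ distZ (-t) := by
    calc distZ t ≤ |t - ((-(round (-t)) : ℤ) : ℝ)| := distZ_le_int _ _
      _ = |(-t) - (round (-t) : ℤ)| := by push_cast; rw [← abs_neg]; ring_nf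
      _ = distZ (-t) := rfl
  linarith

lemma distZ_abs (t : ℝ) : distZ |t| = distZ t := by
  rcases abs_choice t with h | h
  · rw [h]
  · rw [h, distZ_neg]

lemma abs_le_of_distZ_le {t δ : ℝ} (ht : |t| ≤ 1/2) (h : distZ t ≤ δ) : |t| ≤ δ := by
  rcases eq_or_ne (round t) 0 with h0 | h0
  · simpa [distZ, h0] using h
  · have h1 : (1:ℝ) ≤ |((round t : ℤ) : ℝ)| := by
      have : (1:ℤ) ≤ |round t| := Int.one_le_abs h0
      calc (1:ℝ) = ((1:ℤ):ℝ) := by norm_num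
        _ ≤ ((|round t| : ℤ) : ℝ) := by exact_mod_cast this
        _ = |((round t : ℤ):ℝ)| := by rw [Int.cast_abs]
    have h2 : |((round t : ℤ):ℝ)| - |t| ≤ |t - (round t : ℤ)| := by
      calc |((round t : ℤ):ℝ)| - |t| ≤ |((round t : ℤ):ℝ) - t| := abs_sub_abs_le_abs_sub _ _
        _ = |t - (round t : ℤ)| := abs_sub_comm _ _
    have : distZ t = |t - (round t : ℤ)| := rfl
    linarith

lemma measurable_distZ : Measurable distZ := by
  have heq : distZ = fun t => |Int.fract (t + 1/2) - 1/2| := by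
    funext t
    simp only [distZ, round_eq, Int.fract]
    ring_nf
  rw [heq]
  exact ((measurable_fract.comp (measurable_id.add_const _)).sub_const _).abs


lemma counting (β δ : ℝ) (hβ : 0 < β) (hδ : 0 ≤ δ) (hδ2 : δ ≤ 1/2) (D : ℤ) (hD : 0 ≤ D) :
    ((((Finset.Icc (0:ℤ) D).filter (fun d : ℤ => distZ (β * (d:ℝ)) ≤ δ)).card : ℝ))
      ≤ (β * (D:ℝ) + 2) * (2*δ/β + 1) := by
  classical
  set I : Finset ℤ := Finset.Icc 0 ⌊β * (D:ℝ) + 1/2⌋ with hI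
  set J : ℤ → Finset ℤ := fun n => Finset.Icc ⌈((n:ℝ) - δ)/β⌉ ⌊((n:ℝ) + δ)/β⌋ with hJ
  have hsub : (Finset.Icc (0:ℤ) D).filter (fun d : ℤ => distZ (β * (d:ℝ)) ≤ δ) ⊆ I.biUnion J := by
    intro d hd
    simp only [Finset.mem_filter, Finset.mem_Icc] at hd
    obtain ⟨⟨hd0, hdD⟩, hdist⟩ := hd
    set n := round (β * (d:ℝ)) with hn
    have habs : |β * d - (n:ℝ)| ≤ δ := hdist
    have habs' := abs_le.mp habs
    have habs2 := abs_le.mp (abs_sub_round (β * (d:ℝ)))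
    have hdr : (0:ℝ) ≤ β * d := mul_nonneg hβ.le (by exact_mod_cast hd0)
    have hdD' : β * (d:ℝ) ≤ β * (D:ℝ) :=
      mul_le_mul_of_nonneg_left (by exact_mod_cast hdD) hβ.le
    have hn0 : (0:ℤ) ≤ n := by
      have h : (-1:ℤ) < n := by exact_mod_cast show ((-1:ℤ):ℝ) < (n:ℝ) by push_cast; linarith
      omega
    have hnhi : n ≤ ⌊β * (D:ℝ) + 1/2⌋ := Int.le_floor.mpr (by linarith)
    refine Finset.mem_biUnion.mpr ⟨n, Finset.mem_Icc.mpr ⟨hn0, hnhi⟩, Finset.mem_Icc.mpr ⟨?_, ?_⟩⟩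
    · exact Int.ceil_le.mpr ((div_le_iff₀ hβ).mpr (by linarith))
    · exact Int.le_floor.mpr ((le_div_iff₀ hβ).mpr (by linarith))
  have hJcard : ∀ n : ℤ, ((J n).card : ℝ) ≤ 2*δ/β + 1 := by
    intro n
    have hpos : (0:ℝ) ≤ 2*δ/β + 1 := by positivity
    rw [hJ]
    simp only [Int.card_Icc]
    set a := ⌈((n:ℝ) - δ)/β⌉ with ha
    set b := ⌊((n:ℝ) + δ)/β⌋ with hb
    rcases le_or_gt (b + 1 - a) 0 with hle | hlt
    · rw [Int.toNat_of_nonpos hle]; simpa using hpos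
    · have : ((b + 1 - a).toNat : ℝ) = ((b:ℝ) + 1 - a) := by
        rw [show ((b + 1 - a).toNat : ℝ) = (((b + 1 - a).toNat : ℤ) : ℝ) from rfl,
          Int.toNat_of_nonneg hlt.le]; push_cast; ring
      rw [this]
      have h1 : (b:ℝ) ≤ ((n:ℝ) + δ)/β := Int.floor_le _
      have h2 : ((n:ℝ) - δ)/β ≤ (a:ℝ) := Int.le_ceil _
      have h3 : ((n:ℝ) + δ)/β - ((n:ℝ) - δ)/β = 2*δ/β := by
        rw [div_sub_div_same]; ring_nf
      linarith
  have hIcard : ((I.card : ℝ)) ≤ β * (D:ℝ) + 2 := by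
    rw [hI]
    simp only [Int.card_Icc]
    have h0 : (0:ℤ) ≤ ⌊β * (D:ℝ) + 1/2⌋ := Int.le_floor.mpr (by push_cast; nlinarith [mul_nonneg hβ.le (by exact_mod_cast hD : (0:ℝ) ≤ (D:ℝ))])
    have : ((⌊β * (D:ℝ) + 1/2⌋ + 1 - 0).toNat : ℝ) = ((⌊β * (D:ℝ) + 1/2⌋ : ℝ) + 1) := by
      rw [show ((⌊β * (D:ℝ) + 1/2⌋ + 1 - 0).toNat : ℝ) = (((⌊β * (D:ℝ) + 1/2⌋ + 1 - 0).toNat : ℤ) : ℝ) from rfl,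
        Int.toNat_of_nonneg (by omega)]; push_cast; ring
    rw [this]
    have := Int.floor_le (β * (D:ℝ) + 1/2)
    linarith
  calc ((((Finset.Icc (0:ℤ) D).filter (fun d : ℤ => distZ (β * (d:ℝ)) ≤ δ)).card : ℝ))
      ≤ ((I.biUnion J).card : ℝ) := by exact_mod_cast Finset.card_le_card hsub
    _ ≤ ((∑ n ∈ I, (J n).card : ℕ) : ℝ) := by exact_mod_cast Finset.card_biUnion_le
    _ = ∑ n ∈ I, ((J n).card : ℝ) := by push_cast; rfl
    _ ≤ ∑ n ∈ I, (2*δ/β + 1) := Finset.sum_le_sum (fun n _ => hJcard n)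
    _ = (I.card : ℝ) * (2*δ/β + 1) := by rw [Finset.sum_const, nsmul_eq_mul]
    _ ≤ (β * (D:ℝ) + 2) * (2*δ/β + 1) := mul_le_mul_of_nonneg_right hIcard (by positivity)


lemma exists_cMp {Ω : Type} [MeasurableSpace Ω] (μ : Measure Ω) [IsProbabilityMeasure μ]
    (ζ : Ω → ℝ) (hζm : Measurable ζ) (h4 : Integrable (fun ω => (ζ ω) ^ 4) μ)
    (h2 : 0 < ∫ ω, (ζ ω) ^ 2 ∂μ) :
    ∃ c M p : ℝ, 0 < c ∧ c ≤ M ∧ 0 < p ∧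
      p ≤ (μ {ω | c ≤ |ζ ω| ∧ |ζ ω| ≤ M}).toReal := by
  have hA : ∃ c : ℝ, 0 < c ∧ 0 < (μ {ω | c ≤ |ζ ω|}).toReal := by
    by_contra hcon
    push_neg at hcon
    have hnull : ∀ n : ℕ, μ {ω | 1/((n:ℝ)+1) ≤ |ζ ω|} = 0 := by
      intro n
      have h1 : (0:ℝ) < 1/((n:ℝ)+1) := by positivity
      have h3 := le_antisymm (hcon _ h1) ENNReal.toReal_nonneg
      rcases (ENNReal.toReal_eq_zero_iff _).mp h3 with h | h
      · exact h
      · exact absurd h (measure_ne_top _ _)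
    have hz : μ {ω | ζ ω ≠ 0} = 0 := by
      refine measure_mono_null ?_ (measure_iUnion_null (fun n : ℕ => hnull n))
      intro ω hω
      have hpos : 0 < |ζ ω| := abs_pos.mpr hω
      obtain ⟨n, hn⟩ := exists_nat_one_div_lt hpos
      exact Set.mem_iUnion.mpr ⟨n, le_of_lt hn⟩
    have hae : (fun ω => ζ ω ^ 2) =ᵐ[μ] (fun _ => (0:ℝ)) := by
      have h5 : ∀ᵐ ω ∂μ, ζ ω = 0 := by
        rw [ae_iff]; simpa using hz
      filter_upwards [h5] with ω hω; simp [hω]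
    rw [integral_congr_ae hae, integral_zero] at h2
    exact lt_irrefl _ h2
  obtain ⟨c, hc, hq⟩ := hA
  set q := (μ {ω | c ≤ |ζ ω|}).toReal with hqdef
  set m4 := ∫ ω, ζ ω ^ 4 ∂μ with hm4def
  have hm4nn : 0 ≤ m4 := integral_nonneg (fun ω => by positivity)
  set M := max c (max 1 (4 * m4 / q)) with hMdef
  have hMc : c ≤ M := le_max_left _ _
  have hM1 : (1:ℝ) ≤ M := le_trans (le_max_left _ _) (le_max_right _ _)
  have hMq : 4 * m4 / q ≤ M := le_trans (le_max_right _ _) (le_max_right _ _)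
  have hM0 : (0:ℝ) < M := lt_of_lt_of_le one_pos hM1
  have hM4 : 4 * m4 ≤ q * M^4 := by
    have h1 : M ≤ M^4 := by nlinarith [sq_nonneg M, sq_nonneg (M-1), sq_nonneg (M+1), sq_nonneg (M^2-1)]
    have h2' : 4 * m4 ≤ q * M := by
      rw [div_le_iff₀ hq] at hMq; linarith [hMq]
    nlinarith
  have hMarkov : (μ {ω | M^4 ≤ ζ ω ^ 4}).toReal ≤ q / 4 := by
    have h1 : M^4 * (μ {ω | M^4 ≤ ζ ω ^ 4}).toReal ≤ ∫ ω, ζ ω ^ 4 ∂μ := mul_meas_ge_le_integral_of_nonneg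
      (ae_of_all μ (fun ω => by positivity : ∀ ω, 0 ≤ ζ ω ^ 4)) h4 (M^4)
    have hM4pos : (0:ℝ) < M^4 := by positivity
    rw [← hm4def] at h1
    rw [le_div_iff₀ (by norm_num : (0:ℝ) < 4)]
    nlinarith [ENNReal.toReal_nonneg (a := μ {ω | M^4 ≤ ζ ω ^ 4})]
  refine ⟨c, M, q/2, hc, hMc, by positivity, ?_⟩
  have hsub : {ω | c ≤ |ζ ω|} ⊆ {ω | c ≤ |ζ ω| ∧ |ζ ω| ≤ M} ∪ {ω | M^4 ≤ ζ ω ^ 4} := by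
    intro ω hω
    rcases le_or_gt (|ζ ω|) M with h | h
    · exact Or.inl ⟨hω, h⟩
    · refine Or.inr ?_
      have : M^4 < |ζ ω|^4 := by
        have := pow_lt_pow_left₀ h hM0.le (n := 4) (by norm_num)
        exact this
      have habs : |ζ ω|^4 = ζ ω ^ 4 := by
        rw [← abs_pow, abs_of_nonneg (by positivity)]
      simp only [Set.mem_setOf_eq]
      rw [← habs]
      exact this.le
  have hchain : q ≤ (μ {ω | c ≤ |ζ ω| ∧ |ζ ω| ≤ M}).toReal + (μ {ω | M^4 ≤ ζ ω ^ 4}).toReal := by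
    calc q ≤ (μ ({ω | c ≤ |ζ ω| ∧ |ζ ω| ≤ M} ∪ {ω | M^4 ≤ ζ ω ^ 4})).toReal := by
          exact ENNReal.toReal_mono (measure_ne_top _ _) (measure_mono hsub)
      _ ≤ ((μ {ω | c ≤ |ζ ω| ∧ |ζ ω| ≤ M}) + μ {ω | M^4 ≤ ζ ω ^ 4}).toReal := by
          exact ENNReal.toReal_mono
            (ENNReal.add_ne_top.mpr ⟨measure_ne_top _ _, measure_ne_top _ _⟩)
            (measure_union_le _ _)
      _ = _ := ENNReal.toReal_add (measure_ne_top _ _) (measure_ne_top _ _)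
  linarith

end DistAux

set_option maxHeartbeats 2000000 in
open DistAux in
/-- anti-concentration of the expected distance to the integers, for a
uniform point of a lattice interval and a random variable with finite fourth moment. -/
theorem dist_from_integers_bound
    (Ω : Type) [MeasurableSpace Ω] (μ : Measure Ω) [IsProbabilityMeasure μ]
    (ζ : Ω → ℝ) (hζm : Measurable ζ)
    (h4 : Integrable (fun ω => (ζ ω) ^ 4) μ)
    (h2 : 0 < ∫ ω, (ζ ω) ^ 2 ∂μ) :
    ∃ C : ℝ, 0 < C ∧
      ∀ (ε s : ℝ) (k : ℕ) (h₁ h₂ : ℝ),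
        ε ∈ Set.Ioo (0:ℝ) 1 → 0 < s → 0 < k → h₁ < h₂ →
        (uniformOn ({x : ℝ | ∃ z : ℤ, x = z / k} ∩ Set.Icc h₁ h₂)
            {x : ℝ | (∫ ω, distZ (ζ ω * s * x) ∂μ) ≤ ε}).toReal
          ≤ C * max (max (1 / (k * (h₂ - h₁))) (ε / (s * (h₂ - h₁)))) (max ε (s / k)) := by
  classical
  obtain ⟨c, M, p, hc, hcM, hp, hAp⟩ := exists_cMp μ ζ hζm h4 h2
  have hM0 : (0:ℝ) < M := lt_of_lt_of_le hc hcM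
  set C₁ : ℝ := 8*M/(p*c) + M + 16/(p*c) + 2 with hC₁def
  have hC₁pos : 0 < C₁ := by positivity
  set C : ℝ := 4*C₁/p + 8/p + 2 with hCdef
  have hCpos : 0 < C := by positivity
  refine ⟨C, hCpos, ?_⟩
  intro ε s k h₁ h₂ hε hs hk hh
  have hε0 : 0 < ε := hε.1
  set kR : ℝ := (k:ℝ) with hkRdef
  have hkR : (0:ℝ) < kR := by rw [hkRdef]; exact_mod_cast hk
  have hgap0 : (0:ℝ) < h₂ - h₁ := sub_pos.mpr hh
  set m : ℝ := max (max (1 / (kR * (h₂ - h₁))) (ε / (s * (h₂ - h₁)))) (max ε (s / kR)) with hmdef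
  have hm1 : 1 / (kR * (h₂ - h₁)) ≤ m := le_trans (le_max_left _ _) (le_max_left _ _)
  have hm2 : ε / (s * (h₂ - h₁)) ≤ m := le_trans (le_max_right _ _) (le_max_left _ _)
  have hm3 : ε ≤ m := le_trans (le_max_left _ _) (le_max_right _ _)
  have hm4 : s / kR ≤ m := le_trans (le_max_right _ _) (le_max_right _ _)
  have hmpos : 0 < m := lt_of_lt_of_le hε.1 hm3
  set S : Set ℝ := {x : ℝ | ∃ z : ℤ, x = z / k} ∩ Set.Icc h₁ h₂ with hSdef
  set f : ℝ → ℝ := fun x => ∫ ω, distZ (ζ ω * s * x) ∂μ with hfdef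
  set Ev : Set ℝ := {x : ℝ | f x ≤ ε} with hEvdef
  -- trivial bound LHS ≤ 1
  have hLHS1 : (uniformOn S Ev).toReal ≤ 1 := by
    have := prob_le_one (μ := uniformOn S) (s := Ev)
    exact ENNReal.toReal_mono ENNReal.one_ne_top this |>.trans (by norm_num)
  by_cases hcase1 : p/8 ≤ ε
  · have : 1 ≤ (8/p) * ε := by rw [div_mul_eq_mul_div, le_div_iff₀ hp]; linarith
    have h8 : (8/p) * ε ≤ C * m := by
      have hCge : 8/p ≤ C := by
        have : 0 ≤ 4*C₁/p := by positivity
        rw [hCdef]; linarith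
      have := mul_le_mul hCge hm3 hε.1.le hCpos.le
      nlinarith [hε.1]
    exact hLHS1.trans (this.trans h8)
  push_neg at hcase1
  by_cases hcase2 : kR * (h₂ - h₁) ≤ 2
  · have hgp : 0 < kR * (h₂ - h₁) := by positivity
    have h12 : (1:ℝ)/2 ≤ 1 / (kR * (h₂ - h₁)) := by
      rw [div_le_div_iff₀ (by norm_num) hgp]; linarith
    have : 1 ≤ 2 * m := by linarith
    have hCge : (2:ℝ) ≤ C := by
      have h0 : 0 ≤ 4*C₁/p := by positivity
      have h1 : 0 ≤ 8/p := by positivity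
      rw [hCdef]; linarith
    nlinarith
  push_neg at hcase2
  -- Main case : ε < p/8 and kR * (h₂ - h₁) > 2
  set lo : ℤ := ⌈kR * h₁⌉ with hlodef
  set hi : ℤ := ⌊kR * h₂⌋ with hhidef
  have hloub : (lo:ℝ) < kR * h₁ + 1 := Int.ceil_lt_add_one _
  have hlolb : kR * h₁ ≤ (lo:ℝ) := Int.le_ceil _
  have hhilb : kR * h₂ - 1 < (hi:ℝ) := Int.sub_one_lt_floor _
  have hhiub : (hi:ℝ) ≤ kR * h₂ := Int.floor_le _
  have hlohi : lo ≤ hi := by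
    have : (lo:ℝ) < (hi:ℝ) := by nlinarith
    exact_mod_cast this.le
  set T : Finset ℤ := Finset.Icc lo hi with hTdef
  set g : ℤ → ℝ := fun z => (z:ℝ)/kR with hgdef
  have gInj : Function.Injective g := by
    intro a b hab
    simp only [hgdef] at hab
    field_simp [hkR.ne'] at hab
    exact_mod_cast hab
  set B' : Finset ℤ := T.filter (fun z => f (g z) ≤ ε) with hB'def
  -- set identifications
  have hmemS : ∀ x : ℝ, x ∈ S ↔ ∃ z ∈ T, x = g z := by
    intro x
    constructor
    · rintro ⟨⟨z, rfl⟩, hx1, hx2⟩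
      have hx1' : h₁ * kR ≤ (z:ℝ) := by
        have h : h₁ ≤ (z:ℝ)/kR := hx1
        rwa [le_div_iff₀ hkR] at h
      have hx2' : (z:ℝ) ≤ h₂ * kR := by
        have h : (z:ℝ)/kR ≤ h₂ := hx2
        rwa [div_le_iff₀ hkR] at h
      exact ⟨z, Finset.mem_Icc.mpr ⟨Int.ceil_le.mpr (by linarith), Int.le_floor.mpr (by linarith)⟩,
        (rfl : (↑z/↑k : ℝ) = g z)⟩
    · rintro ⟨z, hz, rfl⟩
      rw [Finset.mem_Icc] at hz
      have h1 : kR * h₁ ≤ (z:ℝ) := le_trans hlolb (by exact_mod_cast hz.1)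
      have h2' : (z:ℝ) ≤ kR * h₂ := le_trans (by exact_mod_cast hz.2) hhiub
      exact ⟨⟨z, rfl⟩, (le_div_iff₀ hkR).mpr (by linarith), (div_le_iff₀ hkR).mpr (by linarith)⟩
  have hS_eq : S = ↑(T.image g) := by
    ext x
    rw [Finset.coe_image, Set.mem_image]
    constructor
    · intro hx; obtain ⟨z, hz, rfl⟩ := (hmemS x).mp hx; exact ⟨z, hz, rfl⟩
    · rintro ⟨z, hz, rfl⟩; exact (hmemS _).mpr ⟨z, by exact_mod_cast hz, rfl⟩
  have hSE_eq : S ∩ Ev = ↑(B'.image g) := by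
    ext x
    rw [Finset.coe_image, Set.mem_image]
    constructor
    · rintro ⟨hxS, hxE⟩
      obtain ⟨z, hz, rfl⟩ := (hmemS x).mp hxS
      exact ⟨z, Finset.mem_filter.mpr ⟨hz, hxE⟩, rfl⟩
    · rintro ⟨z, hz, rfl⟩
      rw [Finset.mem_coe, Finset.mem_filter] at hz
      exact ⟨(hmemS _).mpr ⟨z, hz.1, rfl⟩, hz.2⟩
  have hSfin : S.Finite := hS_eq ▸ (T.image g).finite_toSet
  have hSmeas : MeasurableSet S := hSfin.measurableSet
  have hcountS : Measure.count S = (T.card : ENNReal) := by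
    rw [hS_eq, Measure.count_apply_finset, Finset.card_image_of_injective _ gInj]
  have hcountSE : Measure.count (S ∩ Ev) = (B'.card : ENNReal) := by
    rw [hSE_eq, Measure.count_apply_finset, Finset.card_image_of_injective _ gInj]
  have hunif : (uniformOn S Ev).toReal = ((T.card : ℝ))⁻¹ * (B'.card : ℝ) := by
    have h1 : uniformOn S Ev = (Measure.count S)⁻¹ * Measure.count (S ∩ Ev) :=
      cond_apply hSmeas Measure.count Ev
    rw [h1, hcountS, hcountSE, ENNReal.toReal_mul, ENNReal.toReal_inv]
    simp
  -- cardinality of T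
  have hTcard : (T.card : ℝ) = (hi:ℝ) - lo + 1 := by
    rw [hTdef, Int.card_Icc]
    rw [show ((hi + 1 - lo).toNat : ℝ) = (((hi + 1 - lo).toNat : ℤ) : ℝ) from rfl,
      Int.toNat_of_nonneg (by omega)]
    push_cast; ring
  have hNlb : kR * (h₂ - h₁) / 2 ≤ (T.card : ℝ) := by
    rw [hTcard]; nlinarith
  have hNpos : (0:ℝ) < (T.card : ℝ) := by nlinarith
  rw [hunif]
  rcases Finset.eq_empty_or_nonempty B' with hBe | hBne
  · rw [hBe]; simp; positivity
  -- difference trick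
  set j₀ : ℤ := B'.min' hBne with hj₀def
  have hj₀B : j₀ ∈ B' := B'.min'_mem hBne
  have hj₀T : j₀ ∈ T := (Finset.mem_filter.mp hj₀B).1
  set D : ℤ := hi - lo with hDdef
  have hD0 : 0 ≤ D := by omega
  have hDle : (D:ℝ) ≤ kR * (h₂ - h₁) := by
    rw [hDdef]; push_cast; nlinarith
  have hint : ∀ x : ℝ, Integrable (fun ω => distZ (ζ ω * s * x)) μ := by
    intro x
    have hmeas : Measurable fun ω => distZ (ζ ω * s * x) :=
      measurable_distZ.comp ((hζm.mul_const s).mul_const x)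
    refine (integrable_const ((1:ℝ)/2)).mono' hmeas.aestronglyMeasurable (ae_of_all μ fun ω => ?_)
    rw [Real.norm_eq_abs, abs_of_nonneg (distZ_nonneg _)]
    exact distZ_le_half _
  have hf0 : ∀ x : ℝ, 0 ≤ f x := fun x => integral_nonneg fun ω => distZ_nonneg _
  set Bad : Finset ℤ := (Finset.Icc (0:ℤ) D).filter (fun d : ℤ => f (g d) ≤ 2*ε) with hBaddef
  have hBsub : B'.card ≤ Bad.card := by
    apply Finset.card_le_card_of_injOn (fun j => j - j₀)
    · intro j hj
      have hjT : j ∈ T := (Finset.mem_filter.mp hj).1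
      have hjf : f (g j) ≤ ε := (Finset.mem_filter.mp hj).2
      have hj₀f : f (g j₀) ≤ ε := (Finset.mem_filter.mp hj₀B).2
      have hjlo : j₀ ≤ j := B'.min'_le j hj
      rw [Finset.mem_Icc] at hjT hj₀T
      refine Finset.mem_filter.mpr ⟨Finset.mem_Icc.mpr ⟨by dsimp only; omega, by dsimp only; omega⟩, ?_⟩
      have key : ∀ ω, distZ (ζ ω * s * g (j - j₀)) ≤
          distZ (ζ ω * s * g j) + distZ (ζ ω * s * g j₀) := by
        intro ω
        have heq : ζ ω * s * g (j - j₀) = (ζ ω * s * g j) - (ζ ω * s * g j₀) := by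
          simp only [hgdef]; push_cast; field_simp
        rw [heq]; exact distZ_sub_le _ _
      calc f (g (j - j₀)) ≤ ∫ ω, (distZ (ζ ω * s * g j) + distZ (ζ ω * s * g j₀)) ∂μ :=
            integral_mono (hint _) ((hint _).add (hint _)) key
        _ = f (g j) + f (g j₀) := integral_add (hint _) (hint _)
        _ ≤ 2*ε := by linarith
    · intro a _ b _ hab
      simpa using hab
  set δ : ℝ := 4*ε/p with hδdef
  have hδpos : 0 < δ := by rw [hδdef]; positivity
  have hδhalf : δ ≤ 1/2 := by
    rw [hδdef, div_le_iff₀ hp]; nlinarith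
  set Aset : Set Ω := (fun ω => |ζ ω|) ⁻¹' (Set.Icc c M) with hAsetdef
  have hAset_eq : Aset = {ω | c ≤ |ζ ω| ∧ |ζ ω| ≤ M} := rfl
  have hAmeas : MeasurableSet Aset := hζm.abs measurableSet_Icc
  set E : ℤ → Set Ω := fun d => Aset ∩ {ω | distZ (ζ ω * s * g d) ≤ δ} with hEdef
  have hEmeas : ∀ d, MeasurableSet (E d) := by
    intro d
    exact hAmeas.inter ((measurable_distZ.comp ((hζm.mul_const s).mul_const (g d)))
      measurableSet_Iic)
  have hEp : ∀ d ∈ Bad, p/2 ≤ (μ (E d)).toReal := by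
    intro d hd
    have hdf : f (g d) ≤ 2*ε := (Finset.mem_filter.mp hd).2
    set G : Set Ω := {ω | δ ≤ distZ (ζ ω * s * g d)} with hGdef
    have hMark := mul_meas_ge_le_integral_of_nonneg
      (ae_of_all μ fun ω => distZ_nonneg (ζ ω * s * g d)) (hint (g d)) δ
    have hGle : (μ G).toReal ≤ p/2 := by
      have h1 : δ * (μ G).toReal ≤ 2*ε := le_trans hMark hdf
      rw [hδdef] at h1
      have h2' : 0 < 4*ε/p := by positivity
      calc (μ G).toReal ≤ 2*ε/(4*ε/p) := by
            rw [le_div_iff₀ h2']; linarith [h1]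
        _ = p/2 := by
            rw [div_div_eq_mul_div]
            field_simp [hε0.ne']
            ring
    have hsub2 : Aset ⊆ E d ∪ G := by
      intro ω hω
      rcases le_or_gt (distZ (ζ ω * s * g d)) δ with h | h
      · exact Or.inl ⟨hω, h⟩
      · exact Or.inr h.le
    have hchain : (μ Aset).toReal ≤ (μ (E d)).toReal + (μ G).toReal := by
      calc (μ Aset).toReal ≤ (μ (E d ∪ G)).toReal :=
            ENNReal.toReal_mono (measure_ne_top _ _) (measure_mono hsub2)
        _ ≤ ((μ (E d)) + μ G).toReal :=
            ENNReal.toReal_mono (ENNReal.add_ne_top.mpr ⟨measure_ne_top _ _, measure_ne_top _ _⟩)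
              (measure_union_le _ _)
        _ = _ := ENNReal.toReal_add (measure_ne_top _ _) (measure_ne_top _ _)
    rw [hAset_eq] at hchain
    linarith
  set K : ℝ := (M*s*(h₂-h₁) + 2) * (2*δ*kR/(c*s) + 1) with hKdef
  have hK1 : 0 < M*s*(h₂-h₁) + 2 := by nlinarith [mul_pos (mul_pos hM0 hs) hgap0]
  have hK2 : 0 < 2*δ*kR/(c*s) + 1 := by
    have h0 : 0 < 2*δ*kR/(c*s) := div_pos (by positivity) (mul_pos hc hs)
    linarith
  have hKpos : 0 < K := by rw [hKdef]; exact mul_pos hK1 hK2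
  -- pointwise counting
  have hptwise : ∀ ω : Ω, (∑ d ∈ Bad, (E d).indicator (fun _ => (1:ℝ)) ω) ≤ K := by
    intro ω
    by_cases hωA : ω ∈ Aset
    · have hcount : (∑ d ∈ Bad, (E d).indicator (fun _ => (1:ℝ)) ω)
          = ((Bad.filter (fun d => ω ∈ E d)).card : ℝ) := by
        rw [Finset.card_filter]
        push_cast
        apply Finset.sum_congr rfl
        intro d _
        by_cases h : ω ∈ E d <;> simp [Set.indicator_apply, h]
      rw [hcount]
      set β : ℝ := |ζ ω| * s / kR with hβdef
      have hζc : c ≤ |ζ ω| := hωA.1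
      have hζM : |ζ ω| ≤ M := hωA.2
      have hβpos : 0 < β := by
        have : 0 < |ζ ω| := lt_of_lt_of_le hc hζc
        positivity
      have hfsub : Bad.filter (fun d => ω ∈ E d) ⊆
          (Finset.Icc (0:ℤ) D).filter (fun d : ℤ => distZ (β * (d:ℝ)) ≤ δ) := by
        intro d hd
        rw [Finset.mem_filter] at hd ⊢
        have hdIcc : d ∈ Finset.Icc (0:ℤ) D := (Finset.mem_filter.mp hd.1).1
        refine ⟨hdIcc, ?_⟩
        have hd0 : (0:ℝ) ≤ (d:ℝ) := by
          rw [Finset.mem_Icc] at hdIcc; exact_mod_cast hdIcc.1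
        have habs : |ζ ω * s * g d| = β * (d:ℝ) := by
          rw [hβdef, hgdef, abs_mul, abs_mul, abs_of_pos hs,
            abs_of_nonneg (div_nonneg hd0 hkR.le)]
          ring
        have h2'' : distZ (ζ ω * s * g d) ≤ δ := hd.2.2
        calc distZ (β * (d:ℝ)) = distZ |ζ ω * s * g d| := by rw [habs]
          _ = distZ (ζ ω * s * g d) := distZ_abs _
          _ ≤ δ := h2''
      calc ((Bad.filter (fun d => ω ∈ E d)).card : ℝ)
          ≤ (((Finset.Icc (0:ℤ) D).filter (fun d : ℤ => distZ (β * (d:ℝ)) ≤ δ)).card : ℝ) := by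
            exact_mod_cast Finset.card_le_card hfsub
        _ ≤ (β * (D:ℝ) + 2) * (2*δ/β + 1) := counting β δ hβpos hδpos.le hδhalf D hD0
        _ ≤ K := by
            rw [hKdef]
            have hf1 : β * (D:ℝ) + 2 ≤ M*s*(h₂-h₁) + 2 := by
              have h1 : β ≤ M * s / kR := by
                rw [hβdef]; gcongr
              have h2' : β * (D:ℝ) ≤ (M*s/kR) * (kR*(h₂-h₁)) := by
                apply mul_le_mul h1 hDle (by exact_mod_cast hD0) (by positivity)
              have h3 : (M*s/kR) * (kR*(h₂-h₁)) = M*s*(h₂-h₁) := by field_simp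
              linarith [h2']
            have hf2 : 2*δ/β + 1 ≤ 2*δ*kR/(c*s) + 1 := by
              have h1 : c * s / kR ≤ β := by rw [hβdef]; gcongr
              have h2' : 2*δ/β ≤ 2*δ/(c*s/kR) :=
                div_le_div_of_nonneg_left (by positivity) (by positivity) h1
              have h3 : 2*δ/(c*s/kR) = 2*δ*kR/(c*s) := by
                rw [div_div_eq_mul_div]
              linarith
            have hnn1 : (0:ℝ) ≤ 2*δ/β + 1 := by
              have := div_nonneg (by linarith [hδpos] : (0:ℝ) ≤ 2*δ) hβpos.le
              linarith
            exact mul_le_mul hf1 hf2 hnn1 hK1.le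
    · rw [Finset.sum_eq_zero]
      · exact hKpos.le
      · intro d _
        have : ω ∉ E d := fun h => hωA h.1
        simp [Set.indicator_apply, this]
  -- summation
  have hsum : (p/2) * (Bad.card : ℝ) ≤ K := by
    have hindint : ∀ d ∈ Bad, Integrable ((E d).indicator (fun _ => (1:ℝ))) μ :=
      fun d _ => (integrable_const (1:ℝ)).indicator (hEmeas d)
    calc (p/2) * (Bad.card : ℝ) = ∑ _d ∈ Bad, (p/2) := by
          rw [Finset.sum_const, nsmul_eq_mul]; ring
      _ ≤ ∑ d ∈ Bad, (μ (E d)).toReal := Finset.sum_le_sum hEp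
      _ = ∑ d ∈ Bad, ∫ ω, (E d).indicator (fun _ => (1:ℝ)) ω ∂μ := by
          apply Finset.sum_congr rfl
          intro d _
          rw [integral_indicator_const (1:ℝ) (hEmeas d)]
          simp; rfl
      _ = ∫ ω, (∑ d ∈ Bad, (E d).indicator (fun _ => (1:ℝ)) ω) ∂μ :=
          (integral_finset_sum Bad hindint).symm
      _ ≤ ∫ _ω, K ∂μ := integral_mono (integrable_finset_sum Bad hindint) (integrable_const K)
            hptwise
      _ = K := by simp
  -- final arithmetic
  have hBK : (B'.card : ℝ) ≤ (2/p) * K := by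
    have h1 : (B'.card : ℝ) ≤ (Bad.card : ℝ) := by exact_mod_cast hBsub
    rw [div_mul_eq_mul_div, le_div_iff₀ hp]
    nlinarith
  -- K ≤ C₁ * (kR * gap * m)
  have hKm : K ≤ C₁ * (kR * (h₂-h₁) * m) := by
    have hgk : (0:ℝ) < kR * (h₂-h₁) := mul_pos hkR hgap0
    have e1 : s ≤ m * kR := by
      rw [div_le_iff₀ hkR] at hm4; linarith
    have e2 : 1 ≤ kR * (h₂-h₁) * m := by
      rw [div_le_iff₀ hgk] at hm1; linarith
    have e4 : ε ≤ m * (s * (h₂-h₁)) := by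
      rw [div_le_iff₀ (mul_pos hs hgap0)] at hm2; linarith
    have hKexp : K = (8*M/(p*c)) * (ε * (kR*(h₂-h₁))) + M*s*(h₂-h₁)
        + (16/(p*c)) * (ε*kR/s) + 2 := by
      rw [hKdef, hδdef]; field_simp; ring
    have t2b : ε*kR/s ≤ m * (kR*(h₂-h₁)) := by
      rw [div_le_iff₀ hs]
      calc ε*kR ≤ (m*(s*(h₂-h₁)))*kR := mul_le_mul_of_nonneg_right e4 hkR.le
        _ = m*(kR*(h₂-h₁))*s := by ring
    have t1b : M*s*(h₂-h₁) ≤ M * (kR*(h₂-h₁)*m) := by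
      calc M*s*(h₂-h₁) = (M*(h₂-h₁))*s := by ring
        _ ≤ (M*(h₂-h₁))*(m*kR) := mul_le_mul_of_nonneg_left e1 (by positivity)
        _ = M*(kR*(h₂-h₁)*m) := by ring
    have tcross : (8*M/(p*c)) * (ε * (kR*(h₂-h₁))) ≤ (8*M/(p*c)) * (m * (kR*(h₂-h₁))) :=
      mul_le_mul_of_nonneg_left (mul_le_mul_of_nonneg_right hm3 hgk.le) (by positivity)
    have t3b : (16/(p*c)) * (ε*kR/s) ≤ (16/(p*c)) * (m * (kR*(h₂-h₁))) :=
      mul_le_mul_of_nonneg_left t2b (by positivity)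
    have e2b : (2:ℝ) ≤ 2 * (kR*(h₂-h₁)*m) := by linarith
    rw [hKexp, hC₁def]
    calc (8*M/(p*c)) * (ε * (kR*(h₂-h₁))) + M*s*(h₂-h₁) + (16/(p*c)) * (ε*kR/s) + 2
        ≤ (8*M/(p*c)) * (m * (kR*(h₂-h₁))) + M*(kR*(h₂-h₁)*m)
          + (16/(p*c)) * (m*(kR*(h₂-h₁))) + 2*(kR*(h₂-h₁)*m) :=
          add_le_add (add_le_add (add_le_add tcross t1b) t3b) e2b
      _ = (8*M/(p*c) + M + 16/(p*c) + 2) * (kR*(h₂-h₁)*m) := by ring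
  -- combine
  have hinv : ((T.card : ℝ))⁻¹ ≤ 2 / (kR * (h₂-h₁)) := by
    rw [inv_eq_one_div, div_le_div_iff₀ hNpos (mul_pos hkR hgap0)]
    nlinarith [hNlb]
  have hcard0 : (0:ℝ) ≤ (B'.card : ℝ) := Nat.cast_nonneg _
  calc ((T.card : ℝ))⁻¹ * (B'.card : ℝ)
      ≤ (2 / (kR * (h₂-h₁))) * ((2/p) * K) :=
        mul_le_mul hinv hBK hcard0 (by positivity)
    _ ≤ (2 / (kR * (h₂-h₁))) * ((2/p) * (C₁ * (kR * (h₂-h₁) * m))) :=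
        mul_le_mul_of_nonneg_left (mul_le_mul_of_nonneg_left hKm (by positivity))
          (by positivity)
    _ = (4*C₁/p) * m := by field_simp; ring
    _ ≤ C * m := by
        have h1 : 4*C₁/p ≤ C := by
          have h0 : 0 < 8/p := by positivity
          rw [hCdef]; linarith
        exact mul_le_mul_of_nonneg_right h1 hmpos.le
end

section
/- Let r, δ, ρ ∈ (0,1), let g be a growth function, let n ≥ 30/r, and let M_n be an n × n random matrix whose entries are i.i.d. copies of η. Set b_n := Σ_{i=1}^n g(i). Then for every ε > 0: P( ∃ x ∈ V_n(r, g, δ, ρ) with ‖M_n x‖₂ ≤ ε·‖x‖₂ ) ≤ (8/(rn)⁴) · Σ P( dist(C_{i_j}(M_n), H_{i_j}(M_n)) ≤ ε·b_n for all j ∈ {1,2,3,4} ), where the sum is over all 4-tuples (i₁, i₂, i₃, i₄) of pairwise distinct indices in [n]. -/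
open MeasureTheory ProbabilityTheory

/-- Euclidean norm of a vector. -/
noncomputable def l2norm {n : ℕ} (v : Fin n → ℝ) : ℝ := Real.sqrt (∑ i, v i ^ 2)

/-- A growth function: a nondecreasing function from `[1, ∞)` to `[1, ∞)`. -/
def IsGrowth (g : ℝ → ℝ) : Prop :=
  (∀ t, 1 ≤ t → 1 ≤ g t) ∧ MonotoneOn g (Set.Ici 1)

/-- Condition (G) with parameter `K₃`: `g(at) ≥ g(t) + a` for `a ≥ 2`, `t ≥ 1`, and
`∏_{j=1}^∞ g(2^j)^{j·2^{-j}} ≤ K₃` (expressed via all partial products). -/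
def CondG (g : ℝ → ℝ) (K₃ : ℝ) : Prop :=
  (∀ a t : ℝ, 2 ≤ a → 1 ≤ t → g t + a ≤ g (a * t)) ∧
    ∀ N : ℕ, (∏ j ∈ Finset.Icc 1 N, g ((2 : ℝ) ^ j) ^ ((j : ℝ) / 2 ^ j)) ≤ K₃

/-- The lattice set `Λ_n(k, g, Q₁, Q₂, ρ, σ, h)`. -/
def Lambda (n k : ℕ) (g : ℝ → ℝ) (Q₁ Q₂ : Finset (Fin n)) (ρ : ℝ)
    (σ : Equiv.Perm (Fin n)) (h : ℝ) : Set (Fin n → ℝ) :=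
  {x | (∀ i, ∃ z : ℤ, x i = z / k) ∧
    (∀ i : Fin n, |x (σ i)| ≤ g ((n : ℝ) / ((i : ℕ) + 1))) ∧
    (∀ i ∈ Q₁, h ≤ x i) ∧ (∀ i ∈ Q₂, x i ≤ h - ρ)}

/-- The nonincreasing rearrangement of the absolute values of the coordinates. -/
noncomputable def decRe {n : ℕ} (x : Fin n → ℝ) : Fin n → ℝ :=
  fun i => |x (Tuple.sort (fun j => -|x j|) i)|

/-- The `i`-th largest absolute value of a coordinate (1-based index `i`). -/
noncomputable def kthAbs {n : ℕ} (x : Fin n → ℝ) (i : ℕ) : ℝ :=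
  if h : 1 ≤ i ∧ i ≤ n then decRe x ⟨i - 1, by omega⟩ else 0

/-- The set of gradual nonconstant (unstructured) vectors `V_n(r, g, δ, ρ)`. -/
def Vn (n : ℕ) (r : ℝ) (g : ℝ → ℝ) (δ ρ : ℝ) : Set (Fin n → ℝ) :=
  {x | kthAbs x ⌊r * n⌋₊ = 1 ∧
    (∀ i : ℕ, 1 ≤ i → i ≤ n → kthAbs x i ≤ g ((n : ℝ) / i)) ∧
    ∃ Q₁ Q₂ : Finset (Fin n), δ * n ≤ Q₁.card ∧ δ * n ≤ Q₂.card ∧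
      ∀ i ∈ Q₁, ∀ j ∈ Q₂, x j ≤ x i - ρ}

/-- Euclidean distance from the `i`-th column of `A` to the span of the other columns. -/
noncomputable def distToSpan {n : ℕ} (A : Matrix (Fin n) (Fin n) ℝ) (i : Fin n) : ℝ :=
  sInf {d : ℝ | ∃ c : Fin n → ℝ,
    d = l2norm (fun r => A r i - ∑ j ∈ Finset.univ.erase i, c j * A r j)}



lemma l2norm_nonneg {n : ℕ} (v : Fin n → ℝ) : 0 ≤ l2norm v := Real.sqrt_nonneg _

lemma l2norm_eq_norm {n : ℕ} (v : Fin n → ℝ) :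
    l2norm v = ‖(WithLp.linearEquiv 2 ℝ (Fin n → ℝ)).symm v‖ := by
  rw [EuclideanSpace.norm_eq]
  unfold l2norm
  congr 1
  exact Finset.sum_congr rfl fun i _ => by
    rw [show ((WithLp.linearEquiv 2 ℝ (Fin n → ℝ)).symm v) i = v i from rfl,
      Real.norm_eq_abs, sq_abs]

/-- pointwise description of the affine combination inside Euclidean space -/
lemma comb_eq {n : ℕ} (A : Matrix (Fin n) (Fin n) ℝ) (i : Fin n) (c : Fin n → ℝ) :
    (WithLp.linearEquiv 2 ℝ (Fin n → ℝ)).symm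
        (fun r => A r i - ∑ j ∈ Finset.univ.erase i, c j * A r j)
      = (WithLp.linearEquiv 2 ℝ (Fin n → ℝ)).symm (fun r => A r i)
        - ∑ j ∈ Finset.univ.erase i,
            c j • (WithLp.linearEquiv 2 ℝ (Fin n → ℝ)).symm (fun r => A r j) := by
  have : (fun r => A r i - ∑ j ∈ Finset.univ.erase i, c j * A r j)
      = (fun r => A r i) - ∑ j ∈ Finset.univ.erase i, c j • (fun r => A r j) := by
    funext r
    simp [Finset.sum_apply]
  rw [this, map_sub, map_sum]
  congr 1

lemma comb_estimate {n : ℕ} (A : Matrix (Fin n) (Fin n) ℝ) (i : Fin n) (c c' : Fin n → ℝ) :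
    l2norm (fun r => A r i - ∑ j ∈ Finset.univ.erase i, c' j * A r j)
      ≤ l2norm (fun r => A r i - ∑ j ∈ Finset.univ.erase i, c j * A r j)
        + ∑ j ∈ Finset.univ.erase i, |c j - c' j| * l2norm (fun r => A r j) := by
  set u := (WithLp.linearEquiv 2 ℝ (Fin n → ℝ)).symm (fun r => A r i) with hu
  set v : Fin n → EuclideanSpace ℝ (Fin n) :=
    fun j => (WithLp.linearEquiv 2 ℝ (Fin n → ℝ)).symm (fun r => A r j) with hv
  rw [l2norm_eq_norm, l2norm_eq_norm, comb_eq, comb_eq]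
  have hs : ∑ j ∈ Finset.univ.erase i, (c j - c' j) • v j
      = ∑ j ∈ Finset.univ.erase i, c j • v j - ∑ j ∈ Finset.univ.erase i, c' j • v j := by
    rw [← Finset.sum_sub_distrib]
    exact Finset.sum_congr rfl fun j _ => sub_smul _ _ _
  have key : u - ∑ j ∈ Finset.univ.erase i, c' j • v j
      = (u - ∑ j ∈ Finset.univ.erase i, c j • v j)
        + ∑ j ∈ Finset.univ.erase i, (c j - c' j) • v j := by
    rw [hs]; abel
  rw [key]
  refine (norm_add_le _ _).trans ?_
  gcongr
  refine (norm_sum_le _ _).trans ?_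
  refine Finset.sum_le_sum fun j _ => ?_
  rw [norm_smul, Real.norm_eq_abs, l2norm_eq_norm]

lemma distToSpan_le {n : ℕ} (A : Matrix (Fin n) (Fin n) ℝ) (i : Fin n) (c : Fin n → ℝ) :
    distToSpan A i ≤ l2norm (fun r => A r i - ∑ j ∈ Finset.univ.erase i, c j * A r j) := by
  apply csInf_le
  · exact ⟨0, by rintro d ⟨c', rfl⟩; exact l2norm_nonneg _⟩
  · exact ⟨c, rfl⟩

lemma distToSpan_eq_iInf {n : ℕ} (A : Matrix (Fin n) (Fin n) ℝ) (i : Fin n) :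
    distToSpan A i = ⨅ q : Fin n → ℚ,
      l2norm (fun r => A r i - ∑ j ∈ Finset.univ.erase i, (q j : ℝ) * A r j) := by
  have hbdd : BddBelow (Set.range fun q : Fin n → ℚ =>
      l2norm (fun r => A r i - ∑ j ∈ Finset.univ.erase i, (q j : ℝ) * A r j)) :=
    ⟨0, by rintro d ⟨q, rfl⟩; exact l2norm_nonneg _⟩
  apply le_antisymm
  · exact le_ciInf fun q => distToSpan_le A i _
  · refine le_csInf ⟨_, 0, rfl⟩ ?_
    rintro d ⟨c, rfl⟩
    apply le_of_forall_pos_le_add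
    intro ε hε
    set K := ∑ j ∈ Finset.univ.erase i, l2norm (fun r => A r j) with hK
    have hK0 : 0 ≤ K := Finset.sum_nonneg fun j _ => l2norm_nonneg _
    have hδ : 0 < ε / (K + 1) := by positivity
    have hq : ∀ j : Fin n, ∃ q : ℚ, |c j - q| < ε / (K + 1) :=
      fun j => exists_rat_near (c j) hδ
    choose q hq using hq
    refine (ciInf_le hbdd q).trans ?_
    refine (comb_estimate A i c (fun j => (q j : ℝ))).trans ?_
    have h2 : ∑ j ∈ Finset.univ.erase i, |c j - (q j : ℝ)| * l2norm (fun r => A r j)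
        ≤ ∑ j ∈ Finset.univ.erase i, (ε / (K + 1)) * l2norm (fun r => A r j) := by
      refine Finset.sum_le_sum fun j _ => ?_
      exact mul_le_mul_of_nonneg_right (le_of_lt (hq j)) (l2norm_nonneg _)
    refine (add_le_add_right h2 _).trans ?_
    rw [← Finset.mul_sum, ← hK]
    have h3 : ε / (K + 1) * K ≤ ε := by
      rw [div_mul_eq_mul_div, div_le_iff₀ (by linarith)]
      nlinarith
    linarith

lemma measurable_distToSpan {n : ℕ} {Ω : Type} [MeasurableSpace Ω]
    (M : Ω → Matrix (Fin n) (Fin n) ℝ) (hMeas : ∀ i j, Measurable fun ω => M ω i j)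
    (i : Fin n) : Measurable fun ω => distToSpan (M ω) i := by
  simp only [distToSpan_eq_iInf]
  apply Measurable.iInf
  intro q
  unfold l2norm
  apply Real.continuous_sqrt.measurable.comp
  apply Finset.measurable_sum
  intro r _
  apply Measurable.pow_const
  exact (hMeas r i).sub (Finset.measurable_sum _ fun j _ => (measurable_const.mul (hMeas r j)))

lemma count_quad {n : ℕ} (S : Finset (Fin n)) :
    (S.card - 3) ^ 4 ≤ ((Finset.univ : Finset (Fin n × Fin n × Fin n × Fin n)).filter
      (fun q => (q.1 ≠ q.2.1 ∧ q.1 ≠ q.2.2.1 ∧ q.1 ≠ q.2.2.2 ∧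
          q.2.1 ≠ q.2.2.1 ∧ q.2.1 ≠ q.2.2.2 ∧ q.2.2.1 ≠ q.2.2.2) ∧
        q.1 ∈ S ∧ q.2.1 ∈ S ∧ q.2.2.1 ∈ S ∧ q.2.2.2 ∈ S)).card := by
  classical
  set F := ((Finset.univ : Finset (Fin n × Fin n × Fin n × Fin n)).filter
      (fun q => (q.1 ≠ q.2.1 ∧ q.1 ≠ q.2.2.1 ∧ q.1 ≠ q.2.2.2 ∧
          q.2.1 ≠ q.2.2.1 ∧ q.2.1 ≠ q.2.2.2 ∧ q.2.2.1 ≠ q.2.2.2) ∧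
        q.1 ∈ S ∧ q.2.1 ∈ S ∧ q.2.2.1 ∈ S ∧ q.2.2.2 ∈ S)) with hF
  set T : Finset ((_ : Fin n) × (_ : Fin n) × (_ : Fin n) × Fin n) :=
    S.sigma (fun a => (S.erase a).sigma (fun b => ((S.erase a).erase b).sigma
      (fun c => (((S.erase a).erase b).erase c)))) with hT
  have hinj : ∀ t ∈ T, ∀ t' ∈ T,
      (fun t : ((_ : Fin n) × (_ : Fin n) × (_ : Fin n) × Fin n) =>
        (t.1, t.2.1, t.2.2.1, t.2.2.2)) t
      = (fun t : ((_ : Fin n) × (_ : Fin n) × (_ : Fin n) × Fin n) =>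
        (t.1, t.2.1, t.2.2.1, t.2.2.2)) t' → t = t' := by
    rintro ⟨a, b, c, d⟩ _ ⟨a', b', c', d'⟩ _ h
    simp only [Prod.mk.injEq] at h
    obtain ⟨h1, h2, h3, h4⟩ := h
    subst h1; subst h2; subst h3; subst h4; rfl
  have hmaps : ∀ t ∈ T,
      (t.1, t.2.1, t.2.2.1, t.2.2.2) ∈ F := by
    rintro ⟨a, b, c, d⟩ ht
    simp only [hT, Finset.mem_sigma, Finset.mem_erase] at ht
    obtain ⟨ha, ⟨hb1, hb2⟩, ⟨hc1, hc2, hc3⟩, ⟨hd1, hd2, hd3, hd4⟩⟩ := ht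
    simp only [hF, Finset.mem_filter, Finset.mem_univ, true_and]
    exact ⟨⟨Ne.symm hb1, Ne.symm hc2, Ne.symm hd3, Ne.symm hc1, Ne.symm hd2,
      Ne.symm hd1⟩, ha, hb2, hc3, hd4⟩
  have hcard : T.card ≤ F.card := Finset.card_le_card_of_injOn _ hmaps hinj
  refine le_trans ?_ hcard
  rw [hT, Finset.card_sigma]
  have step : ∀ (W : Finset (Fin n)) (a : Fin n), S.card - 3 ≤ W.card + 2 →
      True := fun _ _ _ => trivial
  calc (S.card - 3) ^ 4 = (S.card - 3) * ((S.card - 3) * ((S.card - 3) * (S.card - 3))) := by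
        ring
    _ ≤ ∑ a ∈ S, (S.card - 3) * ((S.card - 3) * (S.card - 3)) := by
        rcases le_or_gt S.card 3 with h | h
        · simp [Nat.sub_eq_zero_of_le h]
        · have : S.card - 3 ≤ S.card := Nat.sub_le _ _
          calc (S.card - 3) * ((S.card - 3) * ((S.card - 3) * (S.card - 3)))
              ≤ S.card * ((S.card - 3) * ((S.card - 3) * (S.card - 3))) :=
                Nat.mul_le_mul_right _ this
            _ = ∑ a ∈ S, (S.card - 3) * ((S.card - 3) * (S.card - 3)) := by
                rw [Finset.sum_const, smul_eq_mul]
    _ ≤ ∑ a ∈ S, ((S.erase a).sigma (fun b => ((S.erase a).erase b).sigma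
          (fun c => (((S.erase a).erase b).erase c)))).card := by
        refine Finset.sum_le_sum fun a _ => ?_
        rw [Finset.card_sigma]
        have h1 : S.card - 3 ≤ (S.erase a).card := by
          have := Finset.pred_card_le_card_erase (s := S) (a := a); omega
        calc (S.card - 3) * ((S.card - 3) * (S.card - 3))
            ≤ (S.erase a).card * ((S.card - 3) * (S.card - 3)) :=
              Nat.mul_le_mul_right _ h1
          _ = ∑ b ∈ S.erase a, (S.card - 3) * (S.card - 3) := by
              rw [Finset.sum_const, smul_eq_mul]
          _ ≤ ∑ b ∈ S.erase a, (((S.erase a).erase b).sigma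
                (fun c => (((S.erase a).erase b).erase c))).card := by
              refine Finset.sum_le_sum fun b _ => ?_
              rw [Finset.card_sigma]
              have h2 : S.card - 3 ≤ ((S.erase a).erase b).card := by
                have e1 := Finset.pred_card_le_card_erase (s := S) (a := a)
                have e2 := Finset.pred_card_le_card_erase (s := S.erase a) (a := b)
                omega
              calc (S.card - 3) * (S.card - 3)
                  ≤ ((S.erase a).erase b).card * (S.card - 3) :=
                    Nat.mul_le_mul_right _ h2
                _ = ∑ c ∈ (S.erase a).erase b, (S.card - 3) := by
                    rw [Finset.sum_const, smul_eq_mul]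
                _ ≤ ∑ c ∈ (S.erase a).erase b, ((((S.erase a).erase b).erase c)).card := by
                    refine Finset.sum_le_sum fun c _ => ?_
                    have e1 := Finset.pred_card_le_card_erase (s := S) (a := a)
                    have e2 := Finset.pred_card_le_card_erase (s := S.erase a) (a := b)
                    have e3 := Finset.pred_card_le_card_erase
                      (s := (S.erase a).erase b) (a := c)
                    omega

lemma decRe_antitone {n : ℕ} (x : Fin n → ℝ) : Antitone (decRe x) := by
  intro i j hij
  have h := Tuple.monotone_sort (fun j => -|x j|) hij
  simpa [decRe] using h

lemma decRe_eq_kthAbs {n : ℕ} (x : Fin n → ℝ) (i : Fin n) :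
    decRe x i = kthAbs x (i.val + 1) := by
  have h : 1 ≤ i.val + 1 ∧ i.val + 1 ≤ n := ⟨by omega, by omega⟩
  rw [kthAbs, dif_pos h]
  congr 1

lemma sum_decRe {n : ℕ} (x : Fin n → ℝ) : ∑ i, decRe x i = ∑ i, |x i| := by
  unfold decRe
  exact Equiv.sum_comp (Tuple.sort (fun j => -|x j|)) (fun j => |x j|)

/-- step 1, part (b):  the ℓ² norm of a gradual vector is at most `∑_{k=1}^n g(k)`. -/
lemma l2norm_le_of_gradual {n : ℕ} (x : Fin n → ℝ) (g : ℝ → ℝ) (hg : IsGrowth g)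
    (hn : 0 < n)
    (hgrad : ∀ i : ℕ, 1 ≤ i → i ≤ n → kthAbs x i ≤ g ((n : ℝ) / i)) :
    l2norm x ≤ ∑ k ∈ Finset.Icc 1 n, g k := by
  have h1 : l2norm x ≤ ∑ i, |x i| := by
    have hsq : ∑ i, x i ^ 2 ≤ (∑ i, |x i|) ^ 2 := by
      have := Finset.sum_sq_le_sq_sum_of_nonneg
        (f := fun i => |x i|) (s := (Finset.univ : Finset (Fin n)))
        (fun i _ => abs_nonneg _)
      simpa [sq_abs] using this
    have := Real.sqrt_le_sqrt hsq
    rwa [Real.sqrt_sq (Finset.sum_nonneg fun i _ => abs_nonneg _)] at this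
  have h2 : ∑ i, |x i| ≤ ∑ i : Fin n, g ((n : ℝ) - i.val) := by
    rw [← sum_decRe]
    refine Finset.sum_le_sum fun i _ => ?_
    rw [decRe_eq_kthAbs]
    have hle := hgrad (i.val + 1) (by omega) (by omega)
    refine hle.trans ?_
    have hi : (i.val : ℝ) ≤ (n : ℝ) - 1 := by
      have := i.isLt
      have : (i.val : ℝ) + 1 ≤ (n : ℝ) := by exact_mod_cast this
      linarith
    have hpos : (0:ℝ) < (i.val : ℝ) + 1 := by positivity
    have hm1 : (1:ℝ) ≤ (n : ℝ) / ((i.val : ℕ) + 1 : ℕ) := by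
      rw [one_le_div (by exact_mod_cast hpos)]
      push_cast
      linarith
    have hcast : ((i.val + 1 : ℕ) : ℝ) = (i.val : ℝ) + 1 := by push_cast; ring
    refine hg.2 (by rw [Set.mem_Ici, hcast] at *; exact_mod_cast hm1)
      (Set.mem_Ici.mpr (by linarith)) ?_
    rw [hcast]
    rw [div_le_iff₀ hpos]
    nlinarith
  have h3 : ∑ i : Fin n, g ((n : ℝ) - i.val) = ∑ k ∈ Finset.Icc 1 n, g k := by
    refine Finset.sum_nbij' (fun i : Fin n => n - i.val)
      (fun k => (⟨(n - k) % n, Nat.mod_lt _ hn⟩ : Fin n)) ?_ ?_ ?_ ?_ ?_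
    · intro i _
      simp only [Finset.mem_Icc]
      have := i.isLt; omega
    · intro k _; exact Finset.mem_univ _
    · intro i _
      have hi := i.isLt
      refine Fin.ext ?_
      show (n - (n - i.val)) % n = i.val
      have h4 : n - (n - i.val) = i.val := by omega
      rw [h4]
      exact Nat.mod_eq_of_lt hi
    · intro k hk
      simp only [Finset.mem_Icc] at hk
      show n - (n - k) % n = k
      rw [Nat.mod_eq_of_lt (by omega)]
      omega
    · intro i _
      have := i.isLt
      congr 1
      have : ((n - i.val : ℕ) : ℝ) = (n : ℝ) - i.val := by
        have : i.val ≤ n := by omega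
        push_cast [this]; ring
      rw [this]
  linarith

lemma exists_big_set {n m : ℕ} (x : Fin n → ℝ) (hm1 : 1 ≤ m) (hmn : m ≤ n)
    (hk : kthAbs x m = 1) :
    ∃ S : Finset (Fin n), S.card = m ∧ ∀ j ∈ S, 1 ≤ |x j| := by
  classical
  set σ := Tuple.sort (fun j : Fin n => -|x j|) with hσ
  refine ⟨(Finset.univ : Finset (Fin m)).image (fun i₀ => σ (Fin.castLE hmn i₀)), ?_, ?_⟩
  · rw [show (fun i₀ : Fin m => σ (Fin.castLE hmn i₀)) = ⇑σ ∘ Fin.castLE hmn from rfl,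
      Finset.card_image_of_injective _ (σ.injective.comp (Fin.castLE_injective hmn)),
      Finset.card_univ, Fintype.card_fin]
  · intro j hj
    simp only [Finset.mem_image, Finset.mem_univ, true_and] at hj
    obtain ⟨i₀, rfl⟩ := hj
    have hkth : kthAbs x m = decRe x ⟨m - 1, by omega⟩ := by
      rw [kthAbs, dif_pos ⟨hm1, hmn⟩]
    have hle : (Fin.castLE hmn i₀ : Fin n) ≤ ⟨m - 1, by omega⟩ := by
      have := i₀.isLt
      simp only [Fin.le_def, Fin.coe_castLE]
      omega
    have := decRe_antitone x hle
    rw [← hkth, hk] at this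
    exact this

lemma col_dist_bound {n : ℕ} (A : Matrix (Fin n) (Fin n) ℝ) (x : Fin n → ℝ) (j : Fin n)
    (hj : 1 ≤ |x j|) : distToSpan A j ≤ l2norm (A.mulVec x) := by
  classical
  have hxj : x j ≠ 0 := by
    intro h
    rw [h, abs_zero] at hj
    linarith
  refine (distToSpan_le A j (fun k => -(x k / x j))).trans ?_
  have hfun : (fun r => A r j - ∑ k ∈ Finset.univ.erase j, -(x k / x j) * A r k)
      = fun r => (A.mulVec x) r / x j := by
    funext r
    have hsum : ∑ k ∈ Finset.univ.erase j, -(x k / x j) * A r k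
        = -((∑ k ∈ Finset.univ.erase j, A r k * x k) / x j) := by
      rw [Finset.sum_div, ← Finset.sum_neg_distrib]
      exact Finset.sum_congr rfl fun k _ => by ring
    rw [hsum]
    have hmv : (A.mulVec x) r = A r j * x j + ∑ k ∈ Finset.univ.erase j, A r k * x k := by
      have : (A.mulVec x) r = ∑ k, A r k * x k := by
        simp [Matrix.mulVec, dotProduct]
      rw [this, ← Finset.add_sum_erase _ _ (Finset.mem_univ j)]
    rw [hmv]
    field_simp
    ring
  rw [hfun]
  unfold l2norm
  apply Real.sqrt_le_sqrt
  refine Finset.sum_le_sum fun rr _ => ?_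
  rw [div_pow]
  have h1 : 1 ≤ (x j) ^ 2 := by nlinarith [sq_abs (x j)]
  exact div_le_self (sq_nonneg _) h1

/-- invertibility via distance. -/
theorem invertibility_via_distance
    (L : ℕ) (a pv : Fin L → ℝ) (b : ℝ)
    (ha0 : ∀ i, a i ≠ 0) (ha1 : ∀ i, |a i| ≤ 1)
    (hpv : ∀ i, 0 < pv i) (hpsum : ∑ i, pv i = 1)
    (r δ ρ : ℝ) (hr : r ∈ Set.Ioo (0:ℝ) 1) (hδ : δ ∈ Set.Ioo (0:ℝ) 1)
    (hρ : ρ ∈ Set.Ioo (0:ℝ) 1)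
    (g : ℝ → ℝ) (hg : IsGrowth g)
    (n : ℕ) (hn : 30 / r ≤ (n : ℝ))
    (p : ℝ) (hp0 : 0 ≤ p) (hp1 : p ≤ 1)
    (Ω : Type) [MeasurableSpace Ω] (μ : Measure Ω) [IsProbabilityMeasure μ]
    (M : Ω → Matrix (Fin n) (Fin n) ℝ)
    (hMeas : ∀ i j, Measurable fun ω => M ω i j)
    (hInd : iIndepFun
      (fun ij : Fin n × Fin n => fun ω => M ω ij.1 ij.2) μ)
    (hLaw : ∀ i j, Measure.map (fun ω => M ω i j) μ = etaLaw L a pv p b) :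
    ∀ ε : ℝ, 0 < ε →
      (μ {ω | ∃ x ∈ Vn n r g δ ρ,
          l2norm ((M ω).mulVec x) ≤ ε * l2norm x}).toReal
        ≤ 8 / (r * n) ^ 4 *
          ∑ q ∈ (Finset.univ : Finset (Fin n × Fin n × Fin n × Fin n)).filter
              (fun q => q.1 ≠ q.2.1 ∧ q.1 ≠ q.2.2.1 ∧ q.1 ≠ q.2.2.2 ∧
                q.2.1 ≠ q.2.2.1 ∧ q.2.1 ≠ q.2.2.2 ∧ q.2.2.1 ≠ q.2.2.2),
            (μ {ω | distToSpan (M ω) q.1 ≤ ε * ∑ i ∈ Finset.Icc 1 n, g i ∧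
                distToSpan (M ω) q.2.1 ≤ ε * ∑ i ∈ Finset.Icc 1 n, g i ∧
                distToSpan (M ω) q.2.2.1 ≤ ε * ∑ i ∈ Finset.Icc 1 n, g i ∧
                distToSpan (M ω) q.2.2.2 ≤ ε * ∑ i ∈ Finset.Icc 1 n, g i}).toReal := by
  intro ε hε
  classical
  have hr0 : 0 < r := hr.1
  have hrn : (30:ℝ) ≤ r * n := by
    rw [div_le_iff₀ hr0] at hn
    linarith
  set b : ℝ := ∑ i ∈ Finset.Icc 1 n, g i with hbdef
  set m : ℕ := ⌊r * (n:ℝ)⌋₊ with hmdef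
  have hm30 : 30 ≤ m := Nat.le_floor (by exact_mod_cast hrn)
  have hmn : m ≤ n := by
    have h1 : r * n ≤ (n : ℝ) := by nlinarith [hr.2, Nat.cast_nonneg (α := ℝ) n]
    calc m ≤ ⌊(n:ℝ)⌋₊ := Nat.floor_le_floor h1
      _ = n := Nat.floor_natCast n
  have hn0 : 0 < n := by omega
  have hD : ∀ i, Measurable fun ω => distToSpan (M ω) i := measurable_distToSpan M hMeas
  set Q : Finset (Fin n × Fin n × Fin n × Fin n) :=
    (Finset.univ : Finset (Fin n × Fin n × Fin n × Fin n)).filter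
      (fun q => q.1 ≠ q.2.1 ∧ q.1 ≠ q.2.2.1 ∧ q.1 ≠ q.2.2.2 ∧
        q.2.1 ≠ q.2.2.1 ∧ q.2.1 ≠ q.2.2.2 ∧ q.2.2.1 ≠ q.2.2.2) with hQdef
  set A : (Fin n × Fin n × Fin n × Fin n) → Set Ω := fun q =>
    {ω | distToSpan (M ω) q.1 ≤ ε * b ∧ distToSpan (M ω) q.2.1 ≤ ε * b ∧
      distToSpan (M ω) q.2.2.1 ≤ ε * b ∧ distToSpan (M ω) q.2.2.2 ≤ ε * b} with hAdef
  have hA : ∀ q, MeasurableSet (A q) := by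
    intro q
    rw [hAdef]
    simp only [Set.setOf_and]
    exact (measurableSet_le (hD _) measurable_const).inter
      ((measurableSet_le (hD _) measurable_const).inter
        ((measurableSet_le (hD _) measurable_const).inter
          (measurableSet_le (hD _) measurable_const)))
  set N : ℕ := (m - 3) ^ 4 with hNdef
  set f : Ω → ENNReal := fun ω => ∑ q ∈ Q, (A q).indicator (fun _ => 1) ω with hfdef
  have hfmeas : Measurable f :=
    Finset.measurable_sum _ fun q _ => measurable_const.indicator (hA q)
  -- the event is contained in {ω | N ≤ f ω}
  have hsub : {ω | ∃ x ∈ Vn n r g δ ρ, l2norm ((M ω).mulVec x) ≤ ε * l2norm x}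
      ⊆ {ω | (N : ENNReal) ≤ f ω} := by
    intro ω hω
    obtain ⟨x, hxV, hxnorm⟩ := hω
    obtain ⟨hk1, hgrad, -⟩ := hxV
    obtain ⟨S, hScard, hSbig⟩ := exists_big_set x (by omega) hmn hk1
    have hl2x : l2norm x ≤ b := l2norm_le_of_gradual x g hg hn0 hgrad
    set Sω : Finset (Fin n) := Finset.univ.filter (fun i => distToSpan (M ω) i ≤ ε * b)
      with hSω
    have hSsub : S ⊆ Sω := by
      intro j hj
      simp only [hSω, Finset.mem_filter, Finset.mem_univ, true_and]
      calc distToSpan (M ω) j ≤ l2norm ((M ω).mulVec x) := col_dist_bound _ x j (hSbig j hj)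
        _ ≤ ε * l2norm x := hxnorm
        _ ≤ ε * b := mul_le_mul_of_nonneg_left hl2x hε.le
    have hScard2 : m ≤ Sω.card := hScard ▸ Finset.card_le_card hSsub
    -- compute f ω as a cardinality
    have hfω : f ω = ((Q.filter (fun q => ω ∈ A q)).card : ENNReal) := by
      rw [hfdef]
      simp only [Set.indicator_apply]
      rw [Finset.sum_boole]
    rw [Set.mem_setOf_eq, hfω]
    rw [Nat.cast_le]
    have hfilter : Q.filter (fun q => ω ∈ A q)
        = (Finset.univ : Finset (Fin n × Fin n × Fin n × Fin n)).filter
          (fun q => (q.1 ≠ q.2.1 ∧ q.1 ≠ q.2.2.1 ∧ q.1 ≠ q.2.2.2 ∧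
              q.2.1 ≠ q.2.2.1 ∧ q.2.1 ≠ q.2.2.2 ∧ q.2.2.1 ≠ q.2.2.2) ∧
            q.1 ∈ Sω ∧ q.2.1 ∈ Sω ∧ q.2.2.1 ∈ Sω ∧ q.2.2.2 ∈ Sω) := by
      rw [hQdef, Finset.filter_filter]
      apply Finset.filter_congr
      intro q _
      simp only [hAdef, Set.mem_setOf_eq, hSω, Finset.mem_filter, Finset.mem_univ, true_and]
    rw [hfilter]
    calc N = (m - 3) ^ 4 := rfl
      _ ≤ (Sω.card - 3) ^ 4 := Nat.pow_le_pow_left (by omega) 4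
      _ ≤ _ := count_quad Sω
  -- Markov
  have hmarkov := mul_meas_ge_le_lintegral (μ := μ) hfmeas (N : ENNReal)
  have hlint : ∫⁻ ω, f ω ∂μ = ∑ q ∈ Q, μ (A q) := by
    rw [hfdef]
    rw [lintegral_finset_sum _ fun q _ => measurable_const.indicator (hA q)]
    exact Finset.sum_congr rfl fun q _ => lintegral_indicator_one (hA q)
  rw [hlint] at hmarkov
  set R : ENNReal := ∑ q ∈ Q, μ (A q) with hRdef
  have hRfin : R ≠ ⊤ := by
    rw [hRdef]
    exact (ENNReal.sum_lt_top.mpr fun q _ => measure_lt_top μ _).ne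
  have hN0 : (N : ENNReal) ≠ 0 := by
    have hNpos : 0 < N := pow_pos (by omega) 4
    exact_mod_cast hNpos.ne'
  have hmono : μ {ω | ∃ x ∈ Vn n r g δ ρ, l2norm ((M ω).mulVec x) ≤ ε * l2norm x}
      ≤ μ {ω | (N : ENNReal) ≤ f ω} := measure_mono hsub
  have hdiv : μ {ω | (N : ENNReal) ≤ f ω} ≤ R / (N : ENNReal) := by
    rw [ENNReal.le_div_iff_mul_le (Or.inl hN0) (Or.inl (ENNReal.natCast_ne_top N))]
    rw [mul_comm]
    exact hmarkov
  have htotal := hmono.trans hdiv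
  have hfin2 : R / (N : ENNReal) ≠ ⊤ :=
    (ENNReal.div_lt_top hRfin hN0).ne
  have htoReal := ENNReal.toReal_mono hfin2 htotal
  rw [ENNReal.toReal_div, ENNReal.toReal_natCast] at htoReal
  have hRtoReal : R.toReal = ∑ q ∈ Q, (μ (A q)).toReal := by
    rw [hRdef]
    exact ENNReal.toReal_sum fun q _ => measure_ne_top μ _
  rw [hRtoReal] at htoReal
  -- final arithmetic
  have hsum0 : 0 ≤ ∑ q ∈ Q, (μ (A q)).toReal :=
    Finset.sum_nonneg fun q _ => ENNReal.toReal_nonneg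
  have hNval : (r * n) ^ 4 / 8 ≤ (N : ℝ) := by
    have hcast : ((m - 3 : ℕ) : ℝ) = (m : ℝ) - 3 := by
      have : 3 ≤ m := by omega
      push_cast [this]
      ring
    have hfloor : r * n - 1 ≤ (m : ℝ) := by
      have := Nat.lt_floor_add_one (r * (n:ℝ))
      rw [← hmdef] at this
      linarith
    have hv : r * n - 4 ≤ ((m - 3 : ℕ) : ℝ) := by rw [hcast]; linarith
    have hu0 : (0:ℝ) < r * n := by linarith
    have h1 : (13/15) * (r * n) ≤ ((m - 3 : ℕ) : ℝ) := by linarith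
    have h2 : ((13/15) * (r * n)) ^ 4 ≤ ((m - 3 : ℕ) : ℝ) ^ 4 :=
      pow_le_pow_left₀ (by positivity) h1 4
    have h3 : (r * n) ^ 4 / 8 ≤ ((13/15) * (r * n)) ^ 4 := by
      rw [mul_pow]
      nlinarith [pow_nonneg hu0.le 4]
    have hNcast : (N : ℝ) = ((m - 3 : ℕ) : ℝ) ^ 4 := by
      rw [hNdef]
      push_cast
      ring
    rw [hNcast]
    linarith
  have hu0 : (0:ℝ) < r * n := by linarith
  have hfrac : 1 / (N : ℝ) ≤ 8 / (r * n) ^ 4 := by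
    have h0 : (0:ℝ) < (r * n) ^ 4 / 8 := by positivity
    have := one_div_le_one_div_of_le h0 hNval
    rwa [one_div_div] at this
  calc (μ {ω | ∃ x ∈ Vn n r g δ ρ, l2norm ((M ω).mulVec x) ≤ ε * l2norm x}).toReal
      ≤ (∑ q ∈ Q, (μ (A q)).toReal) / (N : ℝ) := htoReal
    _ = (∑ q ∈ Q, (μ (A q)).toReal) * (1 / (N : ℝ)) := by rw [div_eq_mul_one_div]
    _ ≤ (∑ q ∈ Q, (μ (A q)).toReal) * (8 / (r * n) ^ 4) :=
        mul_le_mul_of_nonneg_left hfrac hsum0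
    _ = 8 / (r * n) ^ 4 * ∑ q ∈ Q, (μ (A q)).toReal := by ring
end
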